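/- arXiv:math/0611050 — 3 statements merged into one kernel-verified Lean document; each statement's English description precedes it below -/
import Mathlib

section
/- Let W and W' be random variables on the same probability space with L(W') = L(W), E[W] = 0, Var W = 1, and suppose E[W' | W] = (1 − λ)W + R for some constant 0 < λ < 1 and some square-integrable random variable R. Set V = W' − W and assume E|V|³ < ∞. Let τ be uniformly distributed on [0,1], independent of (W, W'). Let f : ℝ → ℝ be continuously differentiable with bounded f and f', such that f' is Lipschitz (so f'' exists almost everywhere and is bounded). Then λ·E[W f(W)] = (1/2)E[V² f'(W)] + (1/2)E[V³ (1 − τ)² f''(W + τV)] + E[R f(W)]. -/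
open MeasureTheory ProbabilityTheory Set Topology Filter


lemma slope_tendsto {F : ℝ → ℝ} {c L : ℝ} (hF : HasDerivAt F L c) {h : ℕ → ℝ}
    (hpos : ∀ n, 0 < h n) (h0 : Tendsto h atTop (nhds 0)) :
    Tendsto (fun n => (F (c + h n) - F c) / h n) atTop (nhds L) := by
  have hslope := hasDerivAt_iff_tendsto_slope.mp hF
  have hmem : Tendsto (fun n => c + h n) atTop (𝓝[≠] c) := by
    apply tendsto_nhdsWithin_of_tendsto_nhds_of_eventually_within
    · simpa using (tendsto_const_nhds.add h0)
    · refine Eventually.of_forall fun n => ?_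
      simp only [Set.mem_compl_iff, Set.mem_singleton_iff]
      intro hcon; nlinarith [hpos n, hcon]
  refine (hslope.comp hmem).congr fun n => ?_
  rw [Function.comp_apply, slope_def_field, show c + h n - c = h n by ring]

/-- FTC for a function Lipschitz on `[a, b+1]`, continuous on `ℝ`, with a.e. derivative. -/
lemma ftc_lip {g g' : ℝ → ℝ} {K a b : ℝ} (hab : a ≤ b) (hK : 0 ≤ K)
    (hgc : Continuous g)
    (hlip : ∀ x ∈ Icc a (b+1), ∀ y ∈ Icc a (b+1), |g x - g y| ≤ K * |x - y|)
    (hae : ∀ᵐ x ∂(volume.restrict (Ioc a b)), HasDerivAt g (g' x) x) :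
    ∫ x in Ioc a b, g' x = g b - g a := by
  set h : ℕ → ℝ := fun n => (1:ℝ) / (n + 1) with hh
  have hhpos : ∀ n, 0 < h n := fun n => by positivity
  have hhle : ∀ n, h n ≤ 1 := fun n => by
    rw [hh]; rw [div_le_one (by positivity)]; push_cast; linarith [Nat.cast_nonneg (α := ℝ) n]
  have hh0 : Tendsto h atTop (nhds 0) := tendsto_one_div_add_atTop_nhds_zero_nat
  set D : ℕ → ℝ → ℝ := fun n x => (g (x + h n) - g x) / h n with hD
  -- uniform bound on Ioc a b
  have hbd : ∀ n, ∀ x ∈ Ioc a b, |D n x| ≤ K := by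
    intro n x hx
    have h1 : x + h n ∈ Icc a (b+1) :=
      ⟨by linarith [hx.1.le, (hhpos n).le], by linarith [hx.2, hhle n]⟩
    have h2 : x ∈ Icc a (b+1) := ⟨hx.1.le, by linarith [hx.2]⟩
    have := hlip _ h1 _ h2
    rw [hD]
    rw [abs_div, abs_of_pos (hhpos n), div_le_iff₀ (hhpos n)]
    calc |g (x + h n) - g x| ≤ K * |x + h n - x| := this
    _ = K * h n := by rw [show x + h n - x = h n by ring, abs_of_pos (hhpos n)]
  have hDcont : ∀ n, Continuous (D n) := fun n =>
    ((hgc.comp (continuous_id.add continuous_const)).sub hgc).div_const _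
  -- DCT
  have hdct : Tendsto (fun n => ∫ x in Ioc a b, D n x) atTop
      (nhds (∫ x in Ioc a b, g' x)) := by
    refine tendsto_integral_of_dominated_convergence (fun _ => K) ?_ ?_ ?_ ?_
    · exact fun n => (hDcont n).aestronglyMeasurable
    · exact integrable_const K
    · intro n
      refine (ae_restrict_iff' measurableSet_Ioc).2 (Eventually.of_forall fun x hx => ?_)
      simpa [Real.norm_eq_abs] using hbd n x hx
    · filter_upwards [hae] with x hx
      simpa using slope_tendsto hx hhpos hh0
  -- compute ∫ D n via shift
  have hgint : ∀ u v : ℝ, IntervalIntegrable g volume u v := fun u v =>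
    hgc.intervalIntegrable u v
  have hshift : ∀ n, ∫ x in Ioc a b, D n x =
      ((∫ x in b..(b + h n), g x) - ∫ x in a..(a + h n), g x) / h n := by
    intro n
    have h1 : ∫ x in Ioc a b, D n x = (∫ x in a..b, D n x) :=
      (intervalIntegral.integral_of_le hab).symm
    have h2 : (∫ x in a..b, D n x)
        = ((∫ x in a..b, g (x + h n)) - ∫ x in a..b, g x) / h n := by
      rw [hD]
      simp only
      rw [intervalIntegral.integral_div,
        intervalIntegral.integral_sub
          (Continuous.intervalIntegrable (by continuity : Continuous fun x : ℝ => g (x + h n)) _ _)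
          (hgint _ _)]
    have h3 : (∫ x in a..b, g (x + h n)) = ∫ x in (a + h n)..(b + h n), g x :=
      intervalIntegral.integral_comp_add_right (fun x => g x) (h n)
    have e1 : (∫ x in (a + h n)..(b + h n), g x)
        = (∫ x in (a + h n)..b, g x) + ∫ x in b..(b + h n), g x :=
      (intervalIntegral.integral_add_adjacent_intervals (hgint _ _) (hgint _ _)).symm
    have e2 : (∫ x in a..b, g x) = (∫ x in a..(a + h n), g x) + ∫ x in (a + h n)..b, g x :=
      (intervalIntegral.integral_add_adjacent_intervals (hgint _ _) (hgint _ _)).symm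
    rw [h1, h2, h3, e1, e2]; ring_nf
  -- boundary limits
  have hbound : ∀ c : ℝ, Tendsto (fun n => (∫ x in c..(c + h n), g x) / h n) atTop (nhds (g c)) := by
    intro c
    have hF : HasDerivAt (fun u => ∫ x in c..u, g x) (g c) c :=
      intervalIntegral.integral_hasDerivAt_right (hgint c c)
        (hgc.stronglyMeasurable.stronglyMeasurableAtFilter) hgc.continuousAt
    have := slope_tendsto hF hhpos hh0
    simpa using this
  have hfinal : Tendsto (fun n => ∫ x in Ioc a b, D n x) atTop (nhds (g b - g a)) := by
    have := (hbound b).sub (hbound a)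
    refine this.congr fun n => ?_
    rw [hshift n]; ring
  exact tendsto_nhds_unique hdct hfinal

lemma lip_mul_bd {s : Set ℝ} {p q : ℝ → ℝ} {Kp Kq Bp Bq : ℝ}
    (hp : ∀ x ∈ s, ∀ y ∈ s, |p x - p y| ≤ Kp * |x - y|)
    (hq : ∀ x ∈ s, ∀ y ∈ s, |q x - q y| ≤ Kq * |x - y|)
    (hbp : ∀ x ∈ s, |p x| ≤ Bp) (hbq : ∀ x ∈ s, |q x| ≤ Bq) :
    ∀ x ∈ s, ∀ y ∈ s, |p x * q x - p y * q y| ≤ (Bp * Kq + Bq * Kp) * |x - y| := by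
  intro x hx y hy
  have e : p x * q x - p y * q y = p x * (q x - q y) + q y * (p x - p y) := by ring
  calc |p x * q x - p y * q y| ≤ |p x * (q x - q y)| + |q y * (p x - p y)| := by
        rw [e]; exact abs_add_le _ _
  _ = |p x| * |q x - q y| + |q y| * |p x - p y| := by rw [abs_mul, abs_mul]
  _ ≤ Bp * (Kq * |x - y|) + Bq * (Kp * |x - y|) := by
      gcongr
      · exact (abs_nonneg _).trans (hbp x hx)
      · exact hbp x hx
      · exact hq x hx y hy
      · exact (abs_nonneg _).trans (hbq y hy)
      · exact hbq y hy
      · exact hp x hx y hy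
  _ = (Bp * Kq + Bq * Kp) * |x - y| := by ring

lemma taylor_id {f f' f'' : ℝ → ℝ} (hderiv : ∀ x, HasDerivAt f (f' x) x)
    (hf'cont : Continuous f') {Cf Cf' : ℝ} {K : NNReal}
    (hfb : ∀ x, |f x| ≤ Cf) (hf'b : ∀ x, |f' x| ≤ Cf')
    (hf'lip : LipschitzWith K f')
    (hderiv2 : ∀ᵐ x ∂(volume : Measure ℝ), HasDerivAt f' (f'' x) x) (w v : ℝ) :
    (∫ x in (0:ℝ)..(w+v), f x) = (∫ x in (0:ℝ)..w, f x) + v * f w + v^2/2 * f' w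
      + v^3/2 * ∫ t in Ioc (0:ℝ) 1, (1-t)^2 * f'' (w + t*v) := by
  have hfc : Continuous f := Differentiable.continuous (fun x => (hderiv x).differentiableAt)
  have hCf : 0 ≤ Cf := le_trans (abs_nonneg _) (hfb 0)
  have hCf' : 0 ≤ Cf' := le_trans (abs_nonneg _) (hf'b 0)
  rcases eq_or_ne v 0 with hv | hv
  · simp [hv]
  -- the C¹ primitive G
  set G : ℝ → ℝ := fun u => ∫ x in (0:ℝ)..u, f x with hGdef
  have hG : ∀ u, HasDerivAt G (f u) u := fun u =>
    intervalIntegral.integral_hasDerivAt_right (hfc.intervalIntegrable _ _)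
      hfc.stronglyMeasurable.stronglyMeasurableAtFilter hfc.continuousAt
  have hGc : Continuous G := Differentiable.continuous (fun u => (hG u).differentiableAt)
  -- Lipschitz facts
  have hGlip : ∀ x y : ℝ, |G x - G y| ≤ Cf * |x - y| := by
    intro x y
    have h1 : G x - G y = ∫ u in y..x, f u :=
      intervalIntegral.integral_interval_sub_left (hfc.intervalIntegrable _ _)
        (hfc.intervalIntegrable _ _)
    rw [h1, ← Real.norm_eq_abs]
    have := intervalIntegral.norm_integral_le_of_norm_le_const
      (C := Cf) (f := f) (a := y) (b := x) (fun u _ => by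
        rw [Real.norm_eq_abs]; exact hfb u)
    simpa [abs_sub_comm] using this
  have hflip : ∀ x y : ℝ, |f x - f y| ≤ Cf' * |x - y| := by
    have hd : Differentiable ℝ f := fun x => (hderiv x).differentiableAt
    have hl : LipschitzWith Cf'.toNNReal f := by
      refine lipschitzWith_of_nnnorm_deriv_le hd fun x => ?_
      rw [← NNReal.coe_le_coe, coe_nnnorm, Real.norm_eq_abs, (hderiv x).deriv,
        Real.coe_toNNReal _ hCf']
      exact hf'b x
    intro x y
    have := hl.dist_le_mul x y
    rwa [Real.dist_eq, Real.dist_eq, Real.coe_toNNReal _ hCf'] at this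
  have hf'l : ∀ x y : ℝ, |f' x - f' y| ≤ (K : ℝ) * |x - y| := by
    intro x y
    have := hf'lip.dist_le_mul x y
    rwa [Real.dist_eq, Real.dist_eq] at this
  -- the auxiliary function
  set Φ : ℝ → ℝ := fun t => G (w + t*v) + (1-t) * (v * f (w + t*v))
      + ((1-t)^2/2) * (v^2 * f' (w + t*v)) with hΦdef
  have hΦc : Continuous Φ := by
    refine Continuous.add (Continuous.add ?_ ?_) ?_
    · exact hGc.comp (by continuity)
    · exact (continuous_const.sub continuous_id).mul
        (continuous_const.mul (hfc.comp (by continuity)))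
    · exact (((continuous_const.sub continuous_id).pow 2).div_const 2).mul
        (continuous_const.mul (hf'cont.comp (by continuity)))
  -- Lipschitz bound for Φ on Icc 0 2
  set E : ℝ := Cf * |v| + (1 * (Cf' * v^2) + (|v| * Cf) * 1)
      + ((1/2) * ((K:ℝ) * v^2 * |v|) + (v^2 * Cf') * 1) with hEdef
  have hE : 0 ≤ E := by positivity
  have hlipΦ : ∀ x ∈ Icc (0:ℝ) (1+1), ∀ y ∈ Icc (0:ℝ) (1+1), |Φ x - Φ y| ≤ E * |x - y| := by
    have h1 : ∀ x ∈ Icc (0:ℝ) 2, ∀ y ∈ Icc (0:ℝ) 2,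
        |G (w + x*v) - G (w + y*v)| ≤ (Cf * |v|) * |x - y| := by
      intro x _ y _
      calc |G (w + x*v) - G (w + y*v)| ≤ Cf * |w + x*v - (w + y*v)| := hGlip _ _
      _ = (Cf * |v|) * |x - y| := by
          rw [show w + x*v - (w + y*v) = v * (x - y) by ring, abs_mul]; ring
    have h2 : ∀ x ∈ Icc (0:ℝ) 2, ∀ y ∈ Icc (0:ℝ) 2,
        |(1-x) * (v * f (w + x*v)) - (1-y) * (v * f (w + y*v))|
          ≤ (1 * (Cf' * v^2) + (|v| * Cf) * 1) * |x - y| := by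
      refine lip_mul_bd ?_ ?_ ?_ ?_
      · intro x _ y _
        rw [show (1-x) - (1-y) = -(x - y) by ring, abs_neg, one_mul]
      · intro x _ y _
        rw [show v * f (w + x*v) - v * f (w + y*v)
            = v * (f (w + x*v) - f (w + y*v)) by ring, abs_mul]
        calc |v| * |f (w + x*v) - f (w + y*v)| ≤ |v| * (Cf' * |w + x*v - (w + y*v)|) := by
              gcongr; exact hflip _ _
        _ = (Cf' * v^2) * |x - y| := by
            rw [show w + x*v - (w + y*v) = v * (x - y) by ring, abs_mul, ← sq_abs]; ring
      · intro x hx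
        rw [abs_le]; constructor <;> [linarith [hx.2]; linarith [hx.1]]
      · intro x _
        rw [abs_mul]
        exact mul_le_mul_of_nonneg_left (hfb _) (abs_nonneg v)
    have h3 : ∀ x ∈ Icc (0:ℝ) 2, ∀ y ∈ Icc (0:ℝ) 2,
        |((1-x)^2/2) * (v^2 * f' (w + x*v)) - ((1-y)^2/2) * (v^2 * f' (w + y*v))|
          ≤ ((1/2) * ((K:ℝ) * v^2 * |v|) + (v^2 * Cf') * 1) * |x - y| := by
      refine lip_mul_bd ?_ ?_ ?_ ?_
      · intro x hx y hy
        rw [show (1-x)^2/2 - (1-y)^2/2 = ((2 - x - y)/2) * (y - x) by ring, abs_mul,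
          abs_sub_comm y x, one_mul]
        have hle : |(2 - x - y)/2| ≤ 1 := by
          rw [abs_le]; constructor <;> linarith [hx.1, hx.2, hy.1, hy.2]
        calc |(2 - x - y)/2| * |x - y| ≤ 1 * |x - y| :=
              mul_le_mul_of_nonneg_right hle (abs_nonneg _)
        _ = |x - y| := one_mul _
      · intro x _ y _
        rw [show v^2 * f' (w + x*v) - v^2 * f' (w + y*v)
            = v^2 * (f' (w + x*v) - f' (w + y*v)) by ring, abs_mul,
          abs_of_nonneg (sq_nonneg v)]
        calc v^2 * |f' (w + x*v) - f' (w + y*v)| ≤ v^2 * ((K:ℝ) * |w + x*v - (w + y*v)|) := by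
              gcongr; exact hf'l _ _
        _ = ((K:ℝ) * v^2 * |v|) * |x - y| := by
            rw [show w + x*v - (w + y*v) = v * (x - y) by ring, abs_mul]; ring
      · intro x hx
        have h1x : (1-x)^2 ≤ 1 := by nlinarith [hx.1, hx.2]
        rw [abs_div, abs_of_nonneg (sq_nonneg (1-x)), abs_two]
        linarith
      · intro x _
        rw [abs_mul, abs_of_nonneg (sq_nonneg v)]
        exact mul_le_mul_of_nonneg_left (hf'b _) (sq_nonneg v)
    intro x hx y hy
    rw [show (1:ℝ)+1 = 2 by norm_num] at hx hy
    have e : Φ x - Φ y = (G (w + x*v) - G (w + y*v))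
        + ((1-x) * (v * f (w + x*v)) - (1-y) * (v * f (w + y*v)))
        + (((1-x)^2/2) * (v^2 * f' (w + x*v)) - ((1-y)^2/2) * (v^2 * f' (w + y*v))) := by
      rw [hΦdef]; ring
    calc |Φ x - Φ y| ≤ |G (w + x*v) - G (w + y*v)|
        + |(1-x) * (v * f (w + x*v)) - (1-y) * (v * f (w + y*v))|
        + |((1-x)^2/2) * (v^2 * f' (w + x*v)) - ((1-y)^2/2) * (v^2 * f' (w + y*v))| := by
          rw [e]; exact (abs_add_le _ _).trans (by gcongr; exact abs_add_le _ _)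
    _ ≤ (Cf * |v|) * |x - y| + (1 * (Cf' * v^2) + (|v| * Cf) * 1) * |x - y|
        + ((1/2) * ((K:ℝ) * v^2 * |v|) + (v^2 * Cf') * 1) * |x - y| := by
          gcongr ?_ + ?_ + ?_
          · exact h1 x hx y hy
          · exact h2 x hx y hy
          · exact h3 x hx y hy
    _ = E * |x - y| := by rw [hEdef]; ring
  -- a.e. second derivative along the affine line
  have hnull : ∀ᵐ t ∂(volume : Measure ℝ), HasDerivAt f' (f'' (w + t*v)) (w + t*v) := by
    rw [ae_iff]
    have h0 : volume {x : ℝ | ¬ HasDerivAt f' (f'' x) x} = 0 := ae_iff.mp hderiv2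
    obtain ⟨N, hSN, hNm, hN0⟩ :=
      exists_measurable_superset_of_null (s := {x : ℝ | ¬ HasDerivAt f' (f'' x) x}) h0
    have hpre : volume ((fun t : ℝ => w + t*v) ⁻¹' N) = 0 := by
      have e1 : (fun t : ℝ => w + t*v) ⁻¹' N = (· * v) ⁻¹' ((fun h : ℝ => w + h) ⁻¹' N) := rfl
      rw [e1, Real.volume_preimage_mul_right hv, measure_preimage_add, hN0, mul_zero]
    refine measure_mono_null (fun t ht => ?_) hpre
    exact hSN ht
  have hae : ∀ᵐ t ∂(volume.restrict (Ioc (0:ℝ) 1)),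
      HasDerivAt Φ (v^3/2 * ((1-t)^2 * f'' (w + t*v))) t := by
    refine ae_restrict_of_ae ?_
    filter_upwards [hnull] with t ht
    have haff : HasDerivAt (fun t : ℝ => w + t*v) v t := by
      simpa using ((hasDerivAt_id t).mul_const v).const_add w
    have hG' : HasDerivAt (fun t : ℝ => G (w + t*v)) (f (w + t*v) * v) t :=
      (hG (w + t*v)).comp (h₂ := G) t haff
    have hf1 : HasDerivAt (fun t : ℝ => f (w + t*v)) (f' (w + t*v) * v) t :=
      (hderiv (w + t*v)).comp t haff
    have hf2 : HasDerivAt (fun t : ℝ => f' (w + t*v)) (f'' (w + t*v) * v) t :=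
      ht.comp t haff
    have hp2 : HasDerivAt (fun t : ℝ => 1 - t) (-1) t := by
      simpa using (hasDerivAt_id t).const_sub 1
    have hp3 : HasDerivAt (fun t : ℝ => (1-t)^2/2) ((2 * (1-t) ^ 1 * (-1))/2) t :=
      (hp2.pow 2).div_const 2
    have := (hG'.add (hp2.mul (hf1.const_mul v))).add (hp3.mul (hf2.const_mul (v^2)))
    exact this.congr_deriv (by ring)
  -- apply FTC
  have key := ftc_lip (a := 0) (b := 1) zero_le_one hE hΦc hlipΦ hae
  have hΦ1 : Φ 1 = G (w + v) := by rw [hΦdef]; norm_num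
  have hΦ0 : Φ 0 = G w + v * f w + v^2/2 * f' w := by rw [hΦdef]; norm_num; ring
  rw [hΦ1, hΦ0] at key
  have hpull : ∫ t in Ioc (0:ℝ) 1, v^3/2 * ((1-t)^2 * f'' (w + t*v))
      = v^3/2 * ∫ t in Ioc (0:ℝ) 1, (1-t)^2 * f'' (w + t*v) := integral_const_mul _ _
  rw [hpull] at key
  show G (w + v) = G w + v * f w + v^2/2 * f' w + v^3/2 * ∫ t in Ioc (0:ℝ) 1, (1-t)^2 * f'' (w + t*v)
  linarith

/-- identity (2.11). For identically distributed `W, W'` with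
`E W = 0`, `Var W = 1`, the regression condition `E[W' | W] = (1-λ)W + R`, a uniform
`[0,1]` variable `τ` independent of `(W, W')`, and `f` continuously differentiable with
bounded `f`, `f'`, with `f'` Lipschitz and `f''` a bounded a.e.-derivative of `f'`,
one has
`λ E[W f(W)] = ½ E[V² f'(W)] + ½ E[V³ (1-τ)² f''(W + τV)] + E[R f(W)]`
where `V = W' - W`. -/
theorem stein_identity_no_exchangeability
    {Ω : Type*} [MeasurableSpace Ω] (μ : Measure Ω) [IsProbabilityMeasure μ]
    (W W' R τ : Ω → ℝ) (hW : Measurable W) (hW' : Measurable W') (hR : Measurable R)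
    (hτ : Measurable τ)
    (hlaw : μ.map W' = μ.map W)
    (hWsq : MemLp W 2 μ) (hRsq : MemLp R 2 μ)
    (hmean : ∫ ω, W ω ∂μ = 0)
    (hvar : ∫ ω, (W ω) ^ 2 ∂μ = 1)
    (l : ℝ) (hl0 : 0 < l) (hl1 : l < 1)
    (hreg : μ[W' | MeasurableSpace.comap W inferInstance]
      =ᵐ[μ] fun ω => (1 - l) * W ω + R ω)
    (hV3 : Integrable (fun ω => |W' ω - W ω| ^ 3) μ)
    (hτunif : μ.map τ = (volume : Measure ℝ).restrict (Set.Icc 0 1))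
    (hτindep : IndepFun τ (fun ω => (W ω, W' ω)) μ)
    (f f' f'' : ℝ → ℝ)
    (hderiv : ∀ x, HasDerivAt f (f' x) x)
    (hf'cont : Continuous f')
    (Cf Cf' Cf'' : ℝ) (K : NNReal)
    (hfb : ∀ x, |f x| ≤ Cf) (hf'b : ∀ x, |f' x| ≤ Cf')
    (hf'lip : LipschitzWith K f')
    (hf''m : Measurable f'') (hf''b : ∀ x, |f'' x| ≤ Cf'')
    (hderiv2 : ∀ᵐ x ∂(volume : Measure ℝ), HasDerivAt f' (f'' x) x) :
    l * ∫ ω, W ω * f (W ω) ∂μ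
      = (1 / 2) * (∫ ω, (W' ω - W ω) ^ 2 * f' (W ω) ∂μ)
        + (1 / 2) * (∫ ω, (W' ω - W ω) ^ 3 * (1 - τ ω) ^ 2
            * f'' (W ω + τ ω * (W' ω - W ω)) ∂μ)
        + ∫ ω, R ω * f (W ω) ∂μ := by
  have hfc : Continuous f := Differentiable.continuous (fun x => (hderiv x).differentiableAt)
  have hCf : 0 ≤ Cf := le_trans (abs_nonneg _) (hfb 0)
  have hCf' : 0 ≤ Cf' := le_trans (abs_nonneg _) (hf'b 0)
  have hCf'' : 0 ≤ Cf'' := le_trans (abs_nonneg _) (hf''b 0)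
  -- basic integrabilities
  have hW'sq : MemLp W' 2 μ := by
    have h1 : MemLp (id : ℝ → ℝ) 2 (μ.map W) := by
      rw [memLp_map_measure_iff aestronglyMeasurable_id hW.aemeasurable]
      exact hWsq
    rw [← hlaw] at h1
    rw [memLp_map_measure_iff aestronglyMeasurable_id hW'.aemeasurable] at h1
    exact h1
  have hW1 : Integrable W μ := hWsq.integrable one_le_two
  have hW'1 : Integrable W' μ := hW'sq.integrable one_le_two
  have hR1 : Integrable R μ := hRsq.integrable one_le_two
  have hVsq : MemLp (fun ω => W' ω - W ω) 2 μ := hW'sq.sub hWsq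
  have hV2int : Integrable (fun ω => (W' ω - W ω) ^ 2) μ := hVsq.integrable_sq
  have hV3' : Integrable (fun ω => (W' ω - W ω) ^ 3) μ :=
    hV3.mono' (((hW'.sub hW).pow_const 3).aestronglyMeasurable)
      (Filter.Eventually.of_forall fun ω => by rw [Real.norm_eq_abs, abs_pow])
  -- multiplication by a bounded measurable factor
  have intmul : ∀ {g : Ω → ℝ}, Integrable g μ → ∀ {φ : Ω → ℝ},
      AEStronglyMeasurable φ μ → ∀ c : ℝ, (∀ ω, ‖φ ω‖ ≤ c) →
      Integrable (fun ω => g ω * φ ω) μ := by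
    intro g hg φ hφ c hb
    exact (hg.bdd_mul hφ (Filter.Eventually.of_forall hb)).congr
      (Filter.Eventually.of_forall fun ω => mul_comm _ _)
  have hfW_bdd : ∀ ω, ‖f (W ω)‖ ≤ Cf := fun ω => by rw [Real.norm_eq_abs]; exact hfb _
  have hf'W_bdd : ∀ ω, ‖f' (W ω)‖ ≤ Cf' := fun ω => by rw [Real.norm_eq_abs]; exact hf'b _
  have hfWm : AEStronglyMeasurable (fun ω => f (W ω)) μ :=
    (hfc.measurable.comp hW).aestronglyMeasurable
  have hf'Wm : AEStronglyMeasurable (fun ω => f' (W ω)) μ :=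
    (hf'cont.measurable.comp hW).aestronglyMeasurable
  have intWfW : Integrable (fun ω => W ω * f (W ω)) μ := intmul hW1 hfWm Cf hfW_bdd
  have intW'fW : Integrable (fun ω => W' ω * f (W ω)) μ := intmul hW'1 hfWm Cf hfW_bdd
  have intRfW : Integrable (fun ω => R ω * f (W ω)) μ := intmul hR1 hfWm Cf hfW_bdd
  have intVfW : Integrable (fun ω => (W' ω - W ω) * f (W ω)) μ :=
    intmul (hW'1.sub hW1) hfWm Cf hfW_bdd
  have intV2f'W : Integrable (fun ω => (W' ω - W ω) ^ 2 * f' (W ω)) μ :=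
    intmul hV2int hf'Wm Cf' hf'W_bdd
  -- the remainder kernel J
  set J : Ω → ℝ := fun ω => ∫ t in Ioc (0:ℝ) 1,
      (1 - t) ^ 2 * f'' (W ω + t * (W' ω - W ω)) with hJdef
  have hJmeas : StronglyMeasurable J := by
    have hm : StronglyMeasurable (fun p : Ω × ℝ =>
        (1 - p.2) ^ 2 * f'' (W p.1 + p.2 * (W' p.1 - W p.1))) := by
      refine Measurable.stronglyMeasurable ?_
      exact ((measurable_const.sub measurable_snd).pow_const 2).mul
        (hf''m.comp ((hW.comp measurable_fst).add
          (measurable_snd.mul ((hW'.comp measurable_fst).sub (hW.comp measurable_fst)))))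
    exact hm.integral_prod_right'
  have hJbdd : ∀ ω, |J ω| ≤ Cf'' := by
    intro ω
    rw [hJdef, ← Real.norm_eq_abs]
    have h1 : (volume.restrict (Ioc (0:ℝ) 1)) (Ioc (0:ℝ) 1) < ⊤ := by
      rw [Measure.restrict_apply_self]
      simp [Real.volume_Ioc]
    calc ‖∫ t in Ioc (0:ℝ) 1, (1 - t) ^ 2 * f'' (W ω + t * (W' ω - W ω))‖
        ≤ Cf'' * (volume (Ioc (0:ℝ) 1)).toReal := by
          refine norm_setIntegral_le_of_norm_le_const ?_ ?_
          · simp [Real.volume_Ioc]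
          · intro t ht
            rw [Real.norm_eq_abs, abs_mul, abs_of_nonneg (sq_nonneg _)]
            calc (1 - t)^2 * |f'' (W ω + t * (W' ω - W ω))| ≤ 1 * Cf'' := by
                  refine mul_le_mul ?_ (hf''b _) (abs_nonneg _) zero_le_one
                  nlinarith [ht.1, ht.2]
            _ = Cf'' := one_mul _
    _ = Cf'' := by simp [Real.volume_Ioc]
  have intV3J : Integrable (fun ω => (W' ω - W ω) ^ 3 * J ω) μ :=
    intmul hV3' hJmeas.aestronglyMeasurable Cf''
      (fun ω => by rw [Real.norm_eq_abs]; exact hJbdd ω)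
  -- primitive of f
  set G : ℝ → ℝ := fun u => ∫ x in (0:ℝ)..u, f x with hGdef
  have hGc : Continuous G := by
    have hG : ∀ u, HasDerivAt G (f u) u := fun u =>
      intervalIntegral.integral_hasDerivAt_right (hfc.intervalIntegrable _ _)
        hfc.stronglyMeasurable.stronglyMeasurableAtFilter hfc.continuousAt
    exact Differentiable.continuous (fun u => (hG u).differentiableAt)
  have hGbd : ∀ x : ℝ, |G x| ≤ Cf * |x| := by
    intro x
    rw [hGdef, ← Real.norm_eq_abs]
    have := intervalIntegral.norm_integral_le_of_norm_le_const
      (C := Cf) (f := f) (a := 0) (b := x) (fun u _ => by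
        rw [Real.norm_eq_abs]; exact hfb u)
    simpa using this
  have intGW : Integrable (fun ω => G (W ω)) μ := by
    refine Integrable.mono' (hW1.abs.const_mul Cf)
      ((hGc.measurable.comp hW).aestronglyMeasurable)
      (Filter.Eventually.of_forall fun ω => ?_)
    rw [Real.norm_eq_abs]
    exact hGbd _
  have intGW' : Integrable (fun ω => G (W' ω)) μ := by
    refine Integrable.mono' (hW'1.abs.const_mul Cf)
      ((hGc.measurable.comp hW').aestronglyMeasurable)
      (Filter.Eventually.of_forall fun ω => ?_)
    rw [Real.norm_eq_abs]
    exact hGbd _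
  -- Step A : equality of G-integrals
  have hGeq : ∫ ω, G (W' ω) ∂μ = ∫ ω, G (W ω) ∂μ := by
    rw [← integral_map hW'.aemeasurable hGc.aestronglyMeasurable,
      ← integral_map hW.aemeasurable hGc.aestronglyMeasurable, hlaw]
  -- Step B : pointwise Taylor
  have hPt : ∀ ω, G (W' ω) = G (W ω) + (W' ω - W ω) * f (W ω)
      + (W' ω - W ω)^2/2 * f' (W ω) + (W' ω - W ω)^3/2 * J ω := by
    intro ω
    have := taylor_id hderiv hf'cont hfb hf'b hf'lip hderiv2 (W ω) (W' ω - W ω)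
    rw [show W ω + (W' ω - W ω) = W' ω by ring] at this
    exact this
  -- Step C : integrate the Taylor identity
  have hsum : ∫ ω, G (W' ω) ∂μ = (∫ ω, G (W ω) ∂μ)
      + (∫ ω, (W' ω - W ω) * f (W ω) ∂μ)
      + (1/2) * (∫ ω, (W' ω - W ω)^2 * f' (W ω) ∂μ)
      + (1/2) * (∫ ω, (W' ω - W ω)^3 * J ω ∂μ) := by
    have h1 : ∫ ω, G (W' ω) ∂μ = ∫ ω, (G (W ω) + (W' ω - W ω) * f (W ω)
        + (1/2) * ((W' ω - W ω)^2 * f' (W ω)) + (1/2) * ((W' ω - W ω)^3 * J ω)) ∂μ := by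
      refine integral_congr_ae (Filter.Eventually.of_forall fun ω => ?_)
      show G (W' ω) = G (W ω) + (W' ω - W ω) * f (W ω)
        + (1/2) * ((W' ω - W ω)^2 * f' (W ω)) + (1/2) * ((W' ω - W ω)^3 * J ω)
      rw [hPt ω]; ring
    have s1 : ∫ ω, (G (W ω) + (W' ω - W ω) * f (W ω)) ∂μ
        = (∫ ω, G (W ω) ∂μ) + ∫ ω, (W' ω - W ω) * f (W ω) ∂μ :=
      integral_add intGW intVfW
    have s2 : ∫ ω, (G (W ω) + (W' ω - W ω) * f (W ω)
          + (1/2) * ((W' ω - W ω)^2 * f' (W ω))) ∂μ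
        = (∫ ω, (G (W ω) + (W' ω - W ω) * f (W ω)) ∂μ)
          + ∫ ω, (1/2) * ((W' ω - W ω)^2 * f' (W ω)) ∂μ :=
      integral_add (intGW.add intVfW) (intV2f'W.const_mul (1/2))
    have s3 : ∫ ω, (G (W ω) + (W' ω - W ω) * f (W ω)
          + (1/2) * ((W' ω - W ω)^2 * f' (W ω)) + (1/2) * ((W' ω - W ω)^3 * J ω)) ∂μ
        = (∫ ω, (G (W ω) + (W' ω - W ω) * f (W ω)
            + (1/2) * ((W' ω - W ω)^2 * f' (W ω))) ∂μ)
          + ∫ ω, (1/2) * ((W' ω - W ω)^3 * J ω) ∂μ :=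
      integral_add ((intGW.add intVfW).add (intV2f'W.const_mul (1/2)))
        (intV3J.const_mul (1/2))
    rw [h1, s3, s2, s1, integral_const_mul, integral_const_mul]
  -- Step D : conditional expectation step
  have hcond : ∫ ω, (W' ω - W ω) * f (W ω) ∂μ
      = - l * (∫ ω, W ω * f (W ω) ∂μ) + ∫ ω, R ω * f (W ω) ∂μ := by
    have hm := hW.comap_le
    have hWm : Measurable[MeasurableSpace.comap W inferInstance] W :=
      fun s hs => ⟨s, hs, rfl⟩
    have hfWsm : StronglyMeasurable[MeasurableSpace.comap W inferInstance]
        (fun ω => f (W ω)) :=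
      (hfc.measurable.comp hWm).stronglyMeasurable
    have hprod : Integrable ((fun ω => f (W ω)) * W') μ :=
      intW'fW.congr (Filter.Eventually.of_forall fun ω => by
        simp [mul_comm])
    have hpull : μ[(fun ω => f (W ω)) * W' | MeasurableSpace.comap W inferInstance]
        =ᵐ[μ] (fun ω => f (W ω)) * μ[W' | MeasurableSpace.comap W inferInstance] :=
      condExp_mul_of_stronglyMeasurable_left hfWsm hprod hW'1
    have h1 : ∫ ω, f (W ω) * W' ω ∂μ = ∫ ω, f (W ω) * ((1 - l) * W ω + R ω) ∂μ := by
      have e1 : ∫ ω, f (W ω) * W' ω ∂μ = ∫ ω, ((fun ω => f (W ω)) * W') ω ∂μ := rfl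
      rw [e1, ← integral_condExp hm (μ := μ) (f := (fun ω => f (W ω)) * W')]
      calc ∫ ω, (μ[(fun ω => f (W ω)) * W' | MeasurableSpace.comap W inferInstance]) ω ∂μ
          = ∫ ω, ((fun ω => f (W ω))
            * μ[W' | MeasurableSpace.comap W inferInstance]) ω ∂μ := integral_congr_ae hpull
      _ = ∫ ω, f (W ω) * ((1 - l) * W ω + R ω) ∂μ := by
          refine integral_congr_ae ?_
          filter_upwards [hreg] with ω hω
          simp only [Pi.mul_apply]
          rw [hω]
    have h2 : ∫ ω, (W' ω - W ω) * f (W ω) ∂μ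
        = (∫ ω, f (W ω) * W' ω ∂μ) - ∫ ω, W ω * f (W ω) ∂μ := by
      rw [← integral_sub (intW'fW.congr (Filter.Eventually.of_forall fun ω => by
          simp [mul_comm]) : Integrable (fun ω => f (W ω) * W' ω) μ) intWfW]
      refine integral_congr_ae (Filter.Eventually.of_forall fun ω => ?_)
      ring
    have h3 : ∫ ω, f (W ω) * ((1 - l) * W ω + R ω) ∂μ
        = (1 - l) * (∫ ω, W ω * f (W ω) ∂μ) + ∫ ω, R ω * f (W ω) ∂μ := by
      have e : ∫ ω, f (W ω) * ((1 - l) * W ω + R ω) ∂μ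
          = ∫ ω, ((1 - l) * (W ω * f (W ω)) + R ω * f (W ω)) ∂μ := by
        refine integral_congr_ae (Filter.Eventually.of_forall fun ω => ?_)
        ring
      rw [e, integral_add (intWfW.const_mul (1 - l)) intRfW, integral_const_mul]
    rw [h2, h1, h3]
    ring
  -- Step E : the τ-independence / Fubini step
  have hτstep : ∫ ω, (W' ω - W ω) ^ 3 * (1 - τ ω) ^ 2
      * f'' (W ω + τ ω * (W' ω - W ω)) ∂μ = ∫ ω, (W' ω - W ω)^3 * J ω ∂μ := by
    set Y : Ω → ℝ × ℝ := fun ω => (W ω, W' ω) with hYdef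
    have hY : Measurable Y := hW.prodMk hW'
    set g : ℝ × (ℝ × ℝ) → ℝ := fun p =>
      (p.2.2 - p.2.1)^3 * (1 - p.1)^2 * f'' (p.2.1 + p.1 * (p.2.2 - p.2.1)) with hgdef
    have hgm : Measurable g := by
      refine Measurable.mul (Measurable.mul ?_ ?_) ?_
      · exact (measurable_snd.snd.sub measurable_snd.fst).pow_const 3
      · exact (measurable_const.sub measurable_fst).pow_const 2
      · exact hf''m.comp (measurable_snd.fst.add
          (measurable_fst.mul (measurable_snd.snd.sub measurable_snd.fst)))
    have hprod : μ.map (fun ω => (τ ω, Y ω)) = (μ.map τ).prod (μ.map Y) :=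
      (indepFun_iff_map_prod_eq_prod_map_map hτ.aemeasurable hY.aemeasurable).mp hτindep
    -- integrability of g on the product
    have hMint : Integrable (fun y : ℝ × ℝ => Cf'' * |y.2 - y.1|^3) (μ.map Y) := by
      rw [integrable_map_measure (g := fun y : ℝ × ℝ => Cf'' * |y.2 - y.1|^3)
        ((measurable_const.mul ((measurable_snd.sub measurable_fst).abs.pow_const
          3)).aestronglyMeasurable) hY.aemeasurable]
      exact (hV3.const_mul Cf'')
    have hTint : Integrable (fun t : ℝ => (1 - t)^2) (μ.map τ) := by
      rw [hτunif]
      exact Continuous.integrableOn_Icc ((continuous_const.sub continuous_id).pow 2)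
    have hgint : Integrable g ((μ.map τ).prod (μ.map Y)) := by
      have hφ := hTint.mul_prod hMint
      refine hφ.mono' hgm.aestronglyMeasurable (Filter.Eventually.of_forall fun p => ?_)
      rw [hgdef]
      simp only [Real.norm_eq_abs]
      rw [abs_mul, abs_mul]
      have h1 : |(p.2.2 - p.2.1)^3| = |p.2.2 - p.2.1|^3 := abs_pow _ _
      have h2 : |(1 - p.1)^2| = (1 - p.1)^2 := abs_of_nonneg (sq_nonneg _)
      rw [h1, h2]
      calc |p.2.2 - p.2.1|^3 * (1 - p.1)^2 * |f'' (p.2.1 + p.1 * (p.2.2 - p.2.1))|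
          ≤ |p.2.2 - p.2.1|^3 * (1 - p.1)^2 * Cf'' := by
            gcongr
            exact hf''b _
      _ = (1 - p.1)^2 * (Cf'' * |p.2.2 - p.2.1|^3) := by ring
    -- main chain
    have e0 : ∫ ω, (W' ω - W ω) ^ 3 * (1 - τ ω) ^ 2
        * f'' (W ω + τ ω * (W' ω - W ω)) ∂μ = ∫ ω, g (τ ω, Y ω) ∂μ := rfl
    have e1 : ∫ ω, g (τ ω, Y ω) ∂μ = ∫ p, g p ∂(μ.map (fun ω => (τ ω, Y ω))) :=
      (integral_map (hτ.prodMk hY).aemeasurable hgm.aestronglyMeasurable).symm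
    have e2 : ∫ p, g p ∂((μ.map τ).prod (μ.map Y))
        = ∫ y, ∫ t, g (t, y) ∂(μ.map τ) ∂(μ.map Y) := integral_prod_symm g hgint
    have e3 : ∀ y : ℝ × ℝ, ∫ t, g (t, y) ∂(μ.map τ)
        = (y.2 - y.1)^3 * ∫ t in Ioc (0:ℝ) 1, (1-t)^2 * f'' (y.1 + t*(y.2-y.1)) := by
      intro y
      rw [hτunif]
      have : ∫ t in Icc (0:ℝ) 1, g (t, y)
          = ∫ t in Ioc (0:ℝ) 1, g (t, y) := integral_Icc_eq_integral_Ioc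
      rw [this]
      have : ∀ t : ℝ, g (t, y) = (y.2 - y.1)^3 * ((1-t)^2 * f'' (y.1 + t*(y.2-y.1))) := by
        intro t; rw [hgdef]; ring
      rw [show (fun t => g (t, y)) = fun t => (y.2 - y.1)^3
        * ((1-t)^2 * f'' (y.1 + t*(y.2-y.1))) from funext this]
      exact integral_const_mul _ _
    have e4 : ∫ y, ∫ t, g (t, y) ∂(μ.map τ) ∂(μ.map Y)
        = ∫ y : ℝ × ℝ, (y.2 - y.1)^3
            * (∫ t in Ioc (0:ℝ) 1, (1-t)^2 * f'' (y.1 + t*(y.2-y.1))) ∂(μ.map Y) :=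
      integral_congr_ae (Filter.Eventually.of_forall e3)
    have hintegrand : AEStronglyMeasurable (fun y : ℝ × ℝ => (y.2 - y.1)^3
        * (∫ t in Ioc (0:ℝ) 1, (1-t)^2 * f'' (y.1 + t*(y.2-y.1)))) (μ.map Y) := by
      refine AEStronglyMeasurable.mul ?_ ?_
      · exact ((measurable_snd.sub measurable_fst).pow_const 3).aestronglyMeasurable
      · refine StronglyMeasurable.aestronglyMeasurable ?_
        have hmeas : StronglyMeasurable (fun p : (ℝ × ℝ) × ℝ =>
            (1 - p.2)^2 * f'' (p.1.1 + p.2 * (p.1.2 - p.1.1))) :=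
          Measurable.stronglyMeasurable
            (((measurable_const.sub measurable_snd).pow_const 2).mul
              (hf''m.comp ((measurable_fst.fst).add
                (measurable_snd.mul ((measurable_fst.snd).sub measurable_fst.fst)))))
        exact hmeas.integral_prod_right' (ν := volume.restrict (Ioc (0:ℝ) 1))
    have e5 : ∫ y : ℝ × ℝ, (y.2 - y.1)^3
        * (∫ t in Ioc (0:ℝ) 1, (1-t)^2 * f'' (y.1 + t*(y.2-y.1))) ∂(μ.map Y)
        = ∫ ω, (W' ω - W ω)^3 * J ω ∂μ :=
      integral_map hY.aemeasurable hintegrand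
    rw [e0, e1, hprod, e2, e4, e5]
  -- final assembly
  rw [hGeq] at hsum
  have hzero : (∫ ω, (W' ω - W ω) * f (W ω) ∂μ)
      + (1/2) * (∫ ω, (W' ω - W ω)^2 * f' (W ω) ∂μ)
      + (1/2) * (∫ ω, (W' ω - W ω)^3 * J ω ∂μ) = 0 := by linarith
  rw [hcond] at hzero
  rw [hτstep]
  linarith
end

section
/- Let h : ℝ → ℝ be measurable with |h(x)| ≤ 1 for all x, let Z be a standard normal random variable, let t > 0, and define h_t(x) = E[h(x + tZ)]. Then h_t is differentiable with h_t'(x) = −t⁻¹ ∫ h(x + ty) φ'(y) dy, where φ is the standard normal density, and sup_x |h_t'(x)| ≤ t⁻¹ √(2/π). -/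
open MeasureTheory ProbabilityTheory Real Filter
open scoped ENNReal NNReal

noncomputable def c : ℝ := Real.sqrt (2 * Real.pi)
lemma c_def : c = Real.sqrt (2 * Real.pi) := rfl
lemma c_pos : 0 < c := Real.sqrt_pos.mpr (by positivity)

lemma phi_hasDerivAt (y : ℝ) :
    HasDerivAt (fun u : ℝ => Real.exp (-(u ^ 2) / 2) / Real.sqrt (2 * Real.pi))
      (-(y * Real.exp (-(y ^ 2) / 2)) / Real.sqrt (2 * Real.pi)) y := by
  have h1 : HasDerivAt (fun u : ℝ => -(u ^ 2) / 2) (-y) y := by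
    have := (hasDerivAt_pow 2 y).neg.div_const 2
    convert this using 1
    any_goals rfl
    ring
  have h2 := (h1.exp).div_const (Real.sqrt (2 * Real.pi))
  convert h2 using 1
  any_goals rfl
  ring

lemma abs_le_exp (u : ℝ) : |u| ≤ Real.exp (u ^ 2 / 4) := by
  have h1 : |u| ≤ 1 + u ^ 2 / 4 := by nlinarith [sq_nonneg (|u| - 2), sq_abs u, abs_nonneg u]
  have h2 := Real.add_one_le_exp (u ^ 2 / 4)
  linarith

lemma key_bound (u : ℝ) : |u| * Real.exp (-(u ^ 2) / 2) ≤ Real.exp (-(u ^ 2) / 4) := by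
  calc |u| * Real.exp (-(u ^ 2) / 2)
      ≤ Real.exp (u ^ 2 / 4) * Real.exp (-(u ^ 2) / 2) :=
        mul_le_mul_of_nonneg_right (abs_le_exp u) (Real.exp_pos _).le
    _ = Real.exp (-(u ^ 2) / 4) := by rw [← Real.exp_add]; ring_nf

lemma gauss_int {b : ℝ} (hb : 0 < b) (x0 : ℝ) :
    Integrable (fun w : ℝ => Real.exp (-b * (w - x0) ^ 2)) :=
  (integrable_exp_neg_mul_sq hb).comp_sub_right x0

lemma integral_comp_affine (g : ℝ → ℝ) (x t : ℝ) (ht : 0 < t) :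
    ∫ z : ℝ, g (x + t * z) = t⁻¹ * ∫ w : ℝ, g w := by
  calc (∫ z : ℝ, g (x + t * z)) = |t⁻¹| • ∫ y : ℝ, g (x + y) :=
        MeasureTheory.Measure.integral_comp_mul_left (fun y => g (x + y)) t
    _ = t⁻¹ * ∫ w : ℝ, g w := by
        rw [integral_add_left_eq_self x (f := g), abs_of_pos (inv_pos.mpr ht), smul_eq_mul]

lemma hasDeriv_main (h : ℝ → ℝ) (hm : Measurable h) (hb : ∀ x, |h x| ≤ 1)
    (t : ℝ) (ht : 0 < t) (x : ℝ) :
    HasDerivAt (fun u => t⁻¹ * ∫ w : ℝ, h w * (Real.exp (-(((w - u) / t) ^ 2) / 2) / c))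
      (t⁻¹ * ∫ z : ℝ, h (x + t * z) * (z * (Real.exp (-(z ^ 2) / 2) / c))) x := by
  set F : ℝ → ℝ → ℝ := fun u w => h w * (Real.exp (-(((w - u) / t) ^ 2) / 2) / c) with hFdef
  set F' : ℝ → ℝ → ℝ :=
    fun u w => h w * ((w - u) / t * (Real.exp (-(((w - u) / t) ^ 2) / 2) / c) / t) with hF'def
  have hmeas : ∀ u : ℝ, AEStronglyMeasurable (F u) volume := by
    intro u
    exact (hm.mul (by fun_prop)).aestronglyMeasurable
  have hFint : Integrable (F x) := by
    apply Integrable.mono' (((gauss_int (show (0:ℝ) < (2*t^2)⁻¹ by positivity) x).div_const c))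
      (hmeas x)
    filter_upwards with w
    have hE : -(((w - x) / t) ^ 2) / 2 = -(2*t^2)⁻¹ * (w - x) ^ 2 := by
      rw [div_pow]
      field_simp
    have hpos : (0:ℝ) < Real.exp (-(((w - x) / t) ^ 2) / 2) / c :=
      div_pos (Real.exp_pos _) c_pos
    calc ‖F x w‖ = |h w| * (Real.exp (-(((w - x) / t) ^ 2) / 2) / c) := by
          rw [hFdef]; simp only [Real.norm_eq_abs, abs_mul, abs_of_pos hpos]
      _ ≤ 1 * (Real.exp (-(((w - x) / t) ^ 2) / 2) / c) :=
          mul_le_mul_of_nonneg_right (hb w) hpos.le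
      _ = Real.exp (-(2*t^2)⁻¹ * (w - x) ^ 2) / c := by rw [one_mul, hE]
  have hF'meas : AEStronglyMeasurable (F' x) volume :=
    (hm.mul (by fun_prop)).aestronglyMeasurable
  have hdiff : ∀ w : ℝ, ∀ u ∈ Metric.ball x 1, HasDerivAt (F · w) (F' u w) u := by
    intro w u _
    have hin : HasDerivAt (fun u : ℝ => (w - u) / t) (-1 / t) u :=
      ((hasDerivAt_id u).const_sub w).div_const t
    have hphi : HasDerivAt (fun u : ℝ => Real.exp (-(((w - u) / t) ^ 2) / 2) / c)
        ((-(((w - u) / t) * Real.exp (-(((w - u) / t) ^ 2) / 2)) / c) * (-1 / t)) u := by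
      rw [c_def]
      exact (phi_hasDerivAt ((w - u) / t)).comp u hin
    have := hphi.const_mul (h w)
    convert this using 1
    any_goals rfl
    rw [hF'def]
    field_simp
  set bound : ℝ → ℝ :=
    fun w => Real.exp (1/(4*t^2)) * (Real.exp (-(8*t^2)⁻¹ * (w - x) ^ 2) / (c * t)) with hbdef
  have hboundint : Integrable bound :=
    ((gauss_int (show (0:ℝ) < (8*t^2)⁻¹ by positivity) x).div_const (c*t)).const_mul _
  have hbound : ∀ w : ℝ, ∀ u ∈ Metric.ball x 1, ‖F' u w‖ ≤ bound w := by
    intro w u hu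
    have hux : (u - x) ^ 2 ≤ 1 := by
      have := Metric.mem_ball.mp hu
      rw [Real.dist_eq] at this
      nlinarith [abs_nonneg (u - x), sq_abs (u - x)]
    have hsq : (w - x) ^ 2 / 2 - 1 ≤ (w - u) ^ 2 := by
      nlinarith [sq_nonneg ((w - x) - 2 * (u - x))]
    have ht2 : (0:ℝ) < t ^ 2 := by positivity
    have hexp : -(((w - u) / t) ^ 2) / 4 ≤ 1/(4*t^2) + (-(8*t^2)⁻¹ * (w - x) ^ 2) := by
      have h3 : -(((w - u) / t) ^ 2) / 4 - (1/(4*t^2) + (-(8*t^2)⁻¹ * (w - x) ^ 2))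
          = (((w - x) ^ 2 / 2 - 1) - (w - u) ^ 2) / (4 * t ^ 2) := by
        field_simp
        ring
      have h4 : (((w - x) ^ 2 / 2 - 1) - (w - u) ^ 2) / (4 * t ^ 2) ≤ 0 := by
        apply div_nonpos_of_nonpos_of_nonneg
        · linarith
        · positivity
      linarith
    have habs : ‖F' u w‖
        = |h w| * (|(w - u) / t| * (Real.exp (-(((w - u) / t) ^ 2) / 2) / c) / t) := by
      rw [hF'def]
      simp only [Real.norm_eq_abs, abs_mul, abs_div, abs_of_pos (Real.exp_pos _),
        abs_of_pos c_pos, abs_of_pos ht]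
    rw [habs]
    calc |h w| * (|(w - u) / t| * (Real.exp (-(((w - u) / t) ^ 2) / 2) / c) / t)
        ≤ 1 * (|(w - u) / t| * (Real.exp (-(((w - u) / t) ^ 2) / 2) / c) / t) := by
          exact mul_le_mul_of_nonneg_right (hb w)
            (div_nonneg (mul_nonneg (abs_nonneg _)
              (div_nonneg (Real.exp_pos _).le c_pos.le)) ht.le)
      _ = (|(w - u) / t| * Real.exp (-(((w - u) / t) ^ 2) / 2)) / (c * t) := by ring
      _ ≤ Real.exp (-(((w - u) / t) ^ 2) / 4) / (c * t) := by
          have hct : 0 < c * t := mul_pos c_pos ht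
          gcongr
          all_goals first
            | exact hct
            | exact hct.le
            | exact key_bound _
      _ ≤ (Real.exp (1/(4*t^2)) * Real.exp (-(8*t^2)⁻¹ * (w - x) ^ 2)) / (c * t) := by
          have hct : 0 < c * t := mul_pos c_pos ht
          gcongr
          all_goals first
            | exact hct
            | exact hct.le
            | (rw [← Real.exp_add]; exact Real.exp_le_exp.mpr hexp)
      _ = bound w := by rw [hbdef]; ring
  have key := hasDerivAt_integral_of_dominated_loc_of_deriv_le
    (F := F) (F' := F') (x₀ := x) (bound := bound) (Metric.ball_mem_nhds x one_pos)
    (Eventually.of_forall hmeas) hFint hF'meas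
    (Eventually.of_forall hbound) hboundint (Eventually.of_forall hdiff)
  have hder := key.2.const_mul t⁻¹
  have hval : ∫ w : ℝ, F' x w
      = ∫ z : ℝ, h (x + t * z) * (z * (Real.exp (-(z ^ 2) / 2) / c)) := by
    have h5 : ∀ z : ℝ, F' x (x + t * z)
        = t⁻¹ * (h (x + t * z) * (z * (Real.exp (-(z ^ 2) / 2) / c))) := by
      intro z
      have hz : (x + t * z - x) / t = z := by field_simp; ring
      rw [hF'def]
      simp only [hz]
      ring
    calc ∫ w : ℝ, F' x w = t * (t⁻¹ * ∫ w : ℝ, F' x w) := by field_simp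
      _ = t * ∫ z : ℝ, F' x (x + t * z) := by rw [← integral_comp_affine (F' x) x t ht]
      _ = t * ∫ z : ℝ, t⁻¹ * (h (x + t * z) * (z * (Real.exp (-(z ^ 2) / 2) / c))) := by
          rw [integral_congr_ae (Eventually.of_forall h5)]
      _ = ∫ z : ℝ, h (x + t * z) * (z * (Real.exp (-(z ^ 2) / 2) / c)) := by
          rw [integral_const_mul]
          field_simp
  rw [← hval]
  exact hder

lemma exp4_int : Integrable (fun z : ℝ => Real.exp (-(z ^ 2) / 4)) := by
  have : (fun z : ℝ => Real.exp (-(z ^ 2) / 4)) = fun z => Real.exp (-(4:ℝ)⁻¹ * z ^ 2) := by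
    funext z; congr 1; ring
  rw [this]
  exact integrable_exp_neg_mul_sq (by norm_num)

lemma ioi_integral : ∫ r in Set.Ioi (0:ℝ), r * Real.exp (-(r ^ 2) / 2) = 1 := by
  have h0 : ∀ r ∈ Set.Ioi (0:ℝ),
      HasDerivAt (fun r : ℝ => -Real.exp (-(r ^ 2) / 2)) (r * Real.exp (-(r ^ 2) / 2)) r := by
    intro r _
    have h1 : HasDerivAt (fun u : ℝ => -(u ^ 2) / 2) (-r) r := by
      convert (hasDerivAt_pow 2 r).neg.div_const 2 using 1
      any_goals rfl
      ring
    convert (h1.exp).neg using 1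
    any_goals rfl
    ring
  have hint : IntegrableOn (fun r : ℝ => r * Real.exp (-(r ^ 2) / 2)) (Set.Ioi 0) := by
    apply Integrable.integrableOn
    apply Integrable.mono' exp4_int (Continuous.aestronglyMeasurable (by continuity))
    filter_upwards with z
    calc ‖z * Real.exp (-(z ^ 2) / 2)‖ = |z| * Real.exp (-(z ^ 2) / 2) := by
          rw [Real.norm_eq_abs, abs_mul, abs_of_pos (Real.exp_pos _)]
      _ ≤ Real.exp (-(z ^ 2) / 4) := key_bound z
  have htend : Tendsto (fun r : ℝ => -Real.exp (-(r ^ 2) / 2)) atTop (nhds 0) := by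
    have h2 : Tendsto (fun r : ℝ => r ^ 2 / 2) atTop atTop :=
      (tendsto_pow_atTop two_ne_zero).atTop_div_const (by norm_num)
    have h3 := Real.tendsto_exp_neg_atTop_nhds_zero.comp h2
    have h4 : (fun r : ℝ => Real.exp (-(r ^ 2) / 2))
        = (fun x : ℝ => Real.exp (-x)) ∘ fun r : ℝ => r ^ 2 / 2 := by
      funext r; simp [Function.comp, neg_div]
    rw [show (0:ℝ) = -0 by norm_num]
    exact Tendsto.neg (h4 ▸ h3)
  have := integral_Ioi_of_hasDerivAt_of_tendsto (Continuous.continuousWithinAt (by continuity)) h0 hint htend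
  simpa using this

lemma two_div_c : 2 / c = Real.sqrt (2 / Real.pi) := by
  have hπ : 0 < Real.pi := Real.pi_pos
  have h1 : c = Real.sqrt 2 * Real.sqrt Real.pi := by
    rw [c_def, Real.sqrt_mul (by norm_num)]
  have h2 : Real.sqrt (2 / Real.pi) = Real.sqrt 2 / Real.sqrt Real.pi :=
    Real.sqrt_div (by norm_num) _
  have h3 : Real.sqrt 2 * Real.sqrt 2 = 2 := Real.mul_self_sqrt (by norm_num)
  have hs2 : 0 < Real.sqrt 2 := Real.sqrt_pos.mpr (by norm_num)
  have hsπ : 0 < Real.sqrt Real.pi := Real.sqrt_pos.mpr hπ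
  rw [h1, h2, div_eq_div_iff (by positivity) hsπ.ne']
  nlinarith [h3]

lemma abs_integral_val : ∫ z : ℝ, |z| * Real.exp (-(z ^ 2) / 2) / c = 2 / c := by
  have habs : (fun z : ℝ => |z| * Real.exp (-(z ^ 2) / 2) / c)
      = fun z : ℝ => (fun r : ℝ => r * Real.exp (-(r ^ 2) / 2) / c) |z| := by
    funext z
    simp only [sq_abs]
  rw [habs, integral_comp_abs (f := fun r : ℝ => r * Real.exp (-(r ^ 2) / 2) / c)]
  rw [integral_div, ioi_integral]
  ring

lemma rep (h : ℝ → ℝ) (t : ℝ) (ht : 0 < t) (x : ℝ) :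
    ∫ z, h (x + t * z) ∂(gaussianReal 0 1)
      = t⁻¹ * ∫ w : ℝ, h w * (Real.exp (-(((w - x) / t) ^ 2) / 2) / c) := by
  have h1 : gaussianReal 0 1
      = volume.withDensity (fun z => ((gaussianPDFReal 0 1 z).toNNReal : ℝ≥0∞)) := by
    rw [gaussianReal_of_var_ne_zero _ one_ne_zero]; rfl
  rw [h1, integral_withDensity_eq_integral_smul (measurable_gaussianPDFReal 0 1).real_toNNReal]
  have h2 : ∀ z : ℝ, ((gaussianPDFReal 0 1 z).toNNReal : ℝ) • h (x + t * z)
      = (fun w => h w * (Real.exp (-(((w - x) / t) ^ 2) / 2) / c)) (x + t * z) := by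
    intro z
    have hz : (x + t * z - x) / t = z := by field_simp; ring
    simp only [hz, smul_eq_mul]
    rw [Real.coe_toNNReal _ (gaussianPDFReal_nonneg 0 1 z)]
    simp only [gaussianPDFReal, c, NNReal.coe_one, mul_one, sub_zero]
    rw [div_eq_mul_inv]
    ring_nf
  calc ∫ z : ℝ, ((gaussianPDFReal 0 1 z).toNNReal : ℝ) • h (x + t * z)
      = ∫ z : ℝ, (fun w => h w * (Real.exp (-(((w - x) / t) ^ 2) / 2) / c)) (x + t * z) :=
        integral_congr_ae (Filter.Eventually.of_forall h2)
    _ = t⁻¹ * ∫ w : ℝ, h w * (Real.exp (-(((w - x) / t) ^ 2) / 2) / c) :=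
      by simpa using integral_comp_affine (fun w => h w * (Real.exp (-(((w - x) / t) ^ 2) / 2) / c)) x t ht

/-- Gaussian smoothing: for measurable `h` with `|h| ≤ 1`, `t > 0`, and
`h_t(x) = E[h(x + tZ)]` with `Z` standard normal, `h_t` is differentiable with
`h_t'(x) = -t⁻¹ ∫ h(x + ty) φ'(y) dy` (`φ` the standard normal density), and
`sup_x |h_t'(x)| ≤ t⁻¹ √(2/π)`. -/
theorem gaussian_smoothing_derivative_bound
    (h : ℝ → ℝ) (hm : Measurable h) (hb : ∀ x, |h x| ≤ 1)
    (t : ℝ) (ht : 0 < t) :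
    (∀ x : ℝ, HasDerivAt (fun u => ∫ z, h (u + t * z) ∂(gaussianReal 0 1))
      (-t⁻¹ * ∫ y, h (x + t * y) *
        deriv (fun u => Real.exp (-(u ^ 2) / 2) / Real.sqrt (2 * Real.pi)) y) x)
    ∧ ∀ x : ℝ, |deriv (fun u => ∫ z, h (u + t * z) ∂(gaussianReal 0 1)) x|
        ≤ t⁻¹ * Real.sqrt (2 / Real.pi) := by
  have hmain : ∀ x : ℝ, HasDerivAt (fun u => ∫ z, h (u + t * z) ∂(gaussianReal 0 1))
      (t⁻¹ * ∫ z : ℝ, h (x + t * z) * (z * (Real.exp (-(z ^ 2) / 2) / c))) x := by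
    intro x
    have hfun : (fun u => ∫ z, h (u + t * z) ∂(gaussianReal 0 1))
        = fun u => t⁻¹ * ∫ w : ℝ, h w * (Real.exp (-(((w - u) / t) ^ 2) / 2) / c) :=
      funext fun u => rep h t ht u
    rw [hfun]
    exact hasDeriv_main h hm hb t ht x
  constructor
  · intro x
    have h6 : (∫ y, h (x + t * y) *
          deriv (fun u => Real.exp (-(u ^ 2) / 2) / Real.sqrt (2 * Real.pi)) y)
        = ∫ z : ℝ, -(h (x + t * z) * (z * (Real.exp (-(z ^ 2) / 2) / c))) := by
      refine integral_congr_ae (Filter.Eventually.of_forall fun y => ?_)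
      dsimp only
      rw [(phi_hasDerivAt y).deriv, c_def]
      ring
    have heq : (-t⁻¹ * ∫ y, h (x + t * y) *
          deriv (fun u => Real.exp (-(u ^ 2) / 2) / Real.sqrt (2 * Real.pi)) y)
        = t⁻¹ * ∫ z : ℝ, h (x + t * z) * (z * (Real.exp (-(z ^ 2) / 2) / c)) := by
      rw [h6, integral_neg]
      ring
    rw [heq]
    exact hmain x
  · intro x
    rw [(hmain x).deriv]
    have hI : |∫ z : ℝ, h (x + t * z) * (z * (Real.exp (-(z ^ 2) / 2) / c))|
        ≤ ∫ z : ℝ, |z| * Real.exp (-(z ^ 2) / 2) / c := by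
      have hgint : Integrable (fun z : ℝ => |z| * Real.exp (-(z ^ 2) / 2) / c) := by
        apply Integrable.mono' (exp4_int.div_const c)
          (Continuous.aestronglyMeasurable (by continuity))
        filter_upwards with z
        rw [Real.norm_eq_abs, abs_div, abs_of_pos c_pos, abs_mul, abs_abs,
          abs_of_pos (Real.exp_pos _)]
        have hc := c_pos
        gcongr
        exact key_bound z
      have hpz : ∀ z : ℝ, ‖h (x + t * z) * (z * (Real.exp (-(z ^ 2) / 2) / c))‖
          ≤ |z| * Real.exp (-(z ^ 2) / 2) / c := by
        intro z
        rw [Real.norm_eq_abs, abs_mul]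
        have h7 : |z * (Real.exp (-(z ^ 2) / 2) / c)| = |z| * (Real.exp (-(z ^ 2) / 2) / c) := by
          rw [abs_mul, abs_div, abs_of_pos (Real.exp_pos _), abs_of_pos c_pos]
        rw [h7]
        calc |h (x + t * z)| * (|z| * (Real.exp (-(z ^ 2) / 2) / c))
            ≤ 1 * (|z| * (Real.exp (-(z ^ 2) / 2) / c)) :=
              mul_le_mul_of_nonneg_right (hb _)
                (mul_nonneg (abs_nonneg _) (div_nonneg (Real.exp_pos _).le c_pos.le))
          _ = |z| * Real.exp (-(z ^ 2) / 2) / c := by ring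
      have hnorm := norm_integral_le_of_norm_le hgint (Filter.Eventually.of_forall hpz)
      simpa using hnorm
    calc |t⁻¹ * ∫ z : ℝ, h (x + t * z) * (z * (Real.exp (-(z ^ 2) / 2) / c))|
        = t⁻¹ * |∫ z : ℝ, h (x + t * z) * (z * (Real.exp (-(z ^ 2) / 2) / c))| := by
          rw [abs_mul, abs_of_pos (inv_pos.mpr ht)]
      _ ≤ t⁻¹ * Real.sqrt (2 / Real.pi) := by
          rw [← two_div_c, ← abs_integral_val]
          exact mul_le_mul_of_nonneg_left hI (inv_pos.mpr ht).le
end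

section
/- Let (W, W') be an exchangeable pair of random variables taking values in the non-negative integers, with E[W] < ∞, and let λ > 0. For each set A of non-negative integers let f_A be the solution of the Poisson Stein equation λ f(j+1) − j f(j) = 1[j ∈ A] − Po(λ){A} for all j ≥ 0 (with f_A(0) = 0). Then for every constant c > 0, d_TV(L(W), Po(λ)) ≤ sup_A |E[(c P₁(W) − λ) f_A(W + 1) − (c P₋₁(W) − W) f_A(W)]|, where P_i(W) = P[W' − W = i | W], Po(λ) is the Poisson distribution with mean λ, and d_TV denotes total variation distance. -/
open MeasureTheory ProbabilityTheory
open scoped NNReal Classical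

set_option maxHeartbeats 1000000

lemma hasSum_exp' (l : ℝ) : HasSum (fun n : ℕ => l ^ n / (Nat.factorial n)) (Real.exp l) := by
  rw [Real.exp_eq_exp_ℝ]
  exact NormedSpace.expSeries_div_hasSum_exp l

lemma tail_bound (l : ℝ) (hl : 0 < l) (g : ℕ → ℝ) (hgbd : ∀ k, |g k| ≤ 1)
    (hS0 : HasSum (fun k => l ^ k / (Nat.factorial k) * g k) 0)
    (fA : ℕ → ℝ) (hf0 : fA 0 = 0)
    (hrec : ∀ j : ℕ, l * fA (j + 1) - (j : ℝ) * fA j = g j) :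
    ∀ j, |fA j| ≤ Real.exp l := by
  have hlne : l ≠ 0 := ne_of_gt hl
  set u : ℕ → ℝ := fun k => l ^ k / (Nat.factorial k) * g k with hu
  have hfacpos' : ∀ k : ℕ, (0:ℝ) < (Nat.factorial k : ℝ) :=
    fun k => by exact_mod_cast Nat.factorial_pos k
  have hunn : ∀ k, |u k| ≤ l ^ k / (Nat.factorial k) := by
    intro k
    simp only [hu]
    rw [abs_mul]
    calc |l ^ k / (Nat.factorial k)| * |g k| ≤ |l ^ k / (Nat.factorial k)| * 1 :=
          mul_le_mul_of_nonneg_left (hgbd k) (abs_nonneg _)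
      _ = l ^ k / (Nat.factorial k) := by
          rw [mul_one, abs_of_nonneg (by positivity)]
  have hsummexp : Summable (fun k : ℕ => l ^ k / (Nat.factorial k)) :=
    Real.summable_pow_div_factorial _
  have husumm : Summable u :=
    Summable.of_abs (hsummexp.of_nonneg_of_le (fun k => abs_nonneg _) hunn)
  set T : ℕ → ℝ := fun j => ∑' m, u (j + m) with hT
  have hsummshift : ∀ j : ℕ, Summable (fun m => u (j + m)) := by
    intro j
    have := (summable_nat_add_iff j).mpr husumm
    simpa [add_comm] using this
  have hT0 : T 0 = 0 := by
    have h1 : T 0 = ∑' m, u (0 + m) := rfl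
    rw [h1]
    simp only [Nat.zero_add]
    exact hS0.tsum_eq
  have hTrec : ∀ j : ℕ, T j = u j + T (j + 1) := by
    intro j
    have h1 : T j = ∑' m, u (j + m) := rfl
    have h2 : T (j + 1) = ∑' m, u (j + 1 + m) := rfl
    rw [h1, h2, Summable.tsum_eq_zero_add (hsummshift j)]
    have hx : ∀ m, u (j + (m + 1)) = u (j + 1 + m) := fun m => by congr 1; omega
    simp only [Nat.add_zero, hx]
  -- representation
  have hrep : ∀ j : ℕ, fA (j + 1) = -(Nat.factorial j : ℝ) / l ^ (j + 1) * T (j + 1) := by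
    intro j
    induction j with
    | zero =>
      have h0 := hrec 0
      simp only [Nat.cast_zero, zero_mul, sub_zero] at h0
      have hT1 : T 1 = -g 0 := by
        have h := hTrec 0
        rw [hT0] at h
        have hu0 : u 0 = g 0 := by simp [hu]
        rw [hu0] at h
        linarith
      have hfA1 : fA 1 = g 0 / l := by
        rw [← h0]; field_simp
      rw [hT1, hfA1]
      simp only [Nat.factorial_zero, Nat.cast_one, pow_one]
      field_simp
      ring
    | succ j ih =>
      have hs : l * fA (j + 1 + 1) - ((j:ℝ) + 1) * fA (j + 1) = g (j + 1) := by
        have h := hrec (j + 1)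
        push_cast at h
        linarith
      have hT2 : T (j + 1 + 1) = T (j + 1) - u (j + 1) := by linarith [hTrec (j + 1)]
      have hfac : (Nat.factorial (j+1) : ℝ) = ((j:ℝ) + 1) * (Nat.factorial j : ℝ) := by
        rw [Nat.factorial_succ]; push_cast; ring
      have hufact : g (j + 1) = u (j + 1) * (Nat.factorial (j+1) : ℝ) / l ^ (j + 1) := by
        simp only [hu]
        field_simp
      have e1 : fA (j + 1 + 1) = (g (j + 1) + ((j:ℝ) + 1) * fA (j + 1)) / l := by
        field_simp
        linarith
      rw [e1, ih, hufact, hT2, hfac]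
      field_simp
      ring
  -- the bound
  intro j
  match j with
  | 0 => rw [hf0]; simpa using (Real.exp_pos l).le
  | (j+1) =>
    have hshift2 : Summable (fun m => l ^ (j + 1 + m) / (Nat.factorial (j + 1 + m)) : ℕ → ℝ) := by
      have := (summable_nat_add_iff (j+1)).mpr hsummexp
      simpa [add_comm] using this
    have hTbd : |T (j+1)| ≤ l ^ (j+1) / (Nat.factorial (j+1)) * Real.exp l := by
      have h1 : |T (j+1)| ≤ ∑' m, l ^ (j + 1 + m) / (Nat.factorial (j + 1 + m)) := by
        have hTj : T (j+1) = ∑' m, u (j + 1 + m) := rfl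
        rw [hTj]
        calc |∑' m, u (j + 1 + m)| ≤ ∑' m, |u (j + 1 + m)| := by
              have hns : Summable fun m => ‖u (j + 1 + m)‖ := by
                simpa [Real.norm_eq_abs] using (hsummshift (j+1)).abs
              simpa [Real.norm_eq_abs] using norm_tsum_le_tsum_norm hns
          _ ≤ ∑' m, l ^ (j + 1 + m) / (Nat.factorial (j + 1 + m)) :=
              Summable.tsum_le_tsum (fun m => hunn _) (hsummshift (j+1)).abs hshift2
      have h2 : ∑' m, l ^ (j + 1 + m) / (Nat.factorial (j + 1 + m))
          ≤ l ^ (j+1) / (Nat.factorial (j+1)) * Real.exp l := by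
        have hterm : ∀ m : ℕ, l ^ (j + 1 + m) / (Nat.factorial (j + 1 + m))
            ≤ l ^ (j+1) / (Nat.factorial (j+1)) * (l ^ m / (Nat.factorial m)) := by
          intro m
          have hfle : ((Nat.factorial (j+1) * Nat.factorial m : ℕ) : ℝ)
              ≤ (Nat.factorial (j + 1 + m) : ℝ) := by
            exact_mod_cast Nat.le_of_dvd (Nat.factorial_pos _)
              (Nat.factorial_mul_factorial_dvd_factorial_add (j+1) m)
          have hstep : l ^ (j + 1 + m) / (Nat.factorial (j + 1 + m))
              ≤ l ^ (j + 1 + m) / ((Nat.factorial (j+1) : ℝ) * (Nat.factorial m : ℝ)) := by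
            apply div_le_div_of_nonneg_left (by positivity) (by positivity)
            push_cast at hfle
            exact hfle
          calc l ^ (j + 1 + m) / (Nat.factorial (j + 1 + m))
              ≤ l ^ (j + 1 + m) / ((Nat.factorial (j+1) : ℝ) * (Nat.factorial m : ℝ)) := hstep
            _ = l ^ (j+1) / (Nat.factorial (j+1)) * (l ^ m / (Nat.factorial m)) := by
                rw [pow_add]; field_simp
        calc ∑' m, l ^ (j + 1 + m) / (Nat.factorial (j + 1 + m))
            ≤ ∑' m, l ^ (j+1) / (Nat.factorial (j+1)) * (l ^ m / (Nat.factorial m)) :=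
              Summable.tsum_le_tsum hterm hshift2 (hsummexp.mul_left _)
          _ = l ^ (j+1) / (Nat.factorial (j+1)) * Real.exp l :=
              ((hasSum_exp' l).mul_left _).tsum_eq
      linarith
    rw [hrep j]
    rw [abs_mul, abs_div, abs_neg, abs_of_nonneg (hfacpos' j).le,
      abs_of_nonneg (by positivity : (0:ℝ) ≤ l ^ (j+1))]
    calc (Nat.factorial j : ℝ) / l ^ (j+1) * |T (j+1)|
        ≤ (Nat.factorial j : ℝ) / l ^ (j+1)
            * (l ^ (j+1) / (Nat.factorial (j+1)) * Real.exp l) :=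
          mul_le_mul_of_nonneg_left hTbd (by positivity)
      _ = (Nat.factorial j : ℝ) / (Nat.factorial (j+1)) * Real.exp l := by
          field_simp
      _ ≤ 1 * Real.exp l := by
          apply mul_le_mul_of_nonneg_right _ (Real.exp_pos _).le
          rw [div_le_one (hfacpos' (j+1))]
          exact_mod_cast Nat.factorial_le (Nat.le_succ j)
      _ = Real.exp l := one_mul _

lemma poissonPMF_apply' (l : ℝ≥0) (k : ℕ) :
    poissonPMF l k = ENNReal.ofReal (poissonPMFReal l k) := rfl

lemma poisson_toReal (l : ℝ≥0) (A : Set ℕ) :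
    ((poissonMeasure l) A).toReal
      = ∑' k, (if k ∈ A then Real.exp (-(l:ℝ)) * l ^ k / (Nat.factorial k) else 0) := by
  rw [poissonMeasure, Measure.sum_apply _ MeasurableSet.of_discrete,
    ENNReal.tsum_toReal_eq]
  · congr 1; funext k
    rw [Measure.smul_apply, Measure.dirac_apply' _ MeasurableSet.of_discrete, Set.indicator_apply]
    split_ifs with h
    · simp only [Pi.one_apply, smul_eq_mul, mul_one]
      exact ENNReal.toReal_ofReal (by positivity)
    · simp
  · intro a
    rw [Measure.smul_apply, Measure.dirac_apply' _ MeasurableSet.of_discrete, Set.indicator_apply]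
    split_ifs
    · simp
    · simp

lemma stein_bound (l : ℝ≥0) (hl : 0 < l) (A : Set ℕ) (fA : ℕ → ℝ) (hf0 : fA 0 = 0)
    (hstein : ∀ j : ℕ, (l : ℝ) * fA (j + 1) - (j : ℝ) * fA j
        = (if j ∈ A then 1 else 0) - ((poissonMeasure l) A).toReal) :
    ∀ j, |fA j| ≤ Real.exp l := by
  have hl0 : (0:ℝ) < (l:ℝ) := hl
  set pA : ℝ := ((poissonMeasure l) A).toReal with hpA
  have hpA01 : 0 ≤ pA ∧ pA ≤ 1 := by
    constructor
    · exact ENNReal.toReal_nonneg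
    · rw [hpA]
      exact ENNReal.toReal_le_of_le_ofReal zero_le_one
        (by simpa using prob_le_one (μ := poissonMeasure l) (s := A))
  have hgbd : ∀ k : ℕ, |(if k ∈ A then (1:ℝ) else 0) - pA| ≤ 1 := by
    intro k
    rw [abs_le]
    split_ifs <;> constructor <;> linarith [hpA01.1, hpA01.2]
  have hsummexp : Summable (fun k : ℕ => (l:ℝ) ^ k / (Nat.factorial k)) :=
    Real.summable_pow_div_factorial _
  have hS0 : HasSum
      (fun k : ℕ => (l:ℝ) ^ k / (Nat.factorial k) * ((if k ∈ A then (1:ℝ) else 0) - pA)) 0 := by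
    have h2 : HasSum
        (fun k : ℕ => if k ∈ A then Real.exp (-(l:ℝ)) * l ^ k / (Nat.factorial k) else 0) pA := by
      have hs : Summable
          (fun k : ℕ => if k ∈ A then Real.exp (-(l:ℝ)) * l ^ k / (Nat.factorial k) else 0) := by
        apply hsummexp.of_nonneg_of_le
        · intro k; split_ifs
          · positivity
          · exact le_refl 0
        · intro k
          split_ifs
          · have h3 : Real.exp (-(l:ℝ)) ≤ 1 :=
              Real.exp_le_one_iff.mpr (neg_nonpos.mpr l.coe_nonneg)
            have h4 : (0:ℝ) ≤ (l:ℝ) ^ k / (Nat.factorial k) := by positivity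
            calc Real.exp (-(l:ℝ)) * (l:ℝ) ^ k / (Nat.factorial k)
                = Real.exp (-(l:ℝ)) * ((l:ℝ) ^ k / (Nat.factorial k)) := by ring
              _ ≤ 1 * ((l:ℝ) ^ k / (Nat.factorial k)) := mul_le_mul_of_nonneg_right h3 h4
              _ = (l:ℝ) ^ k / (Nat.factorial k) := one_mul _
          · positivity
      have := hs.hasSum
      rwa [← poisson_toReal l A, ← hpA] at this
    have h1 : HasSum (fun k : ℕ => if k ∈ A then (l:ℝ) ^ k / (Nat.factorial k) else 0)
        (Real.exp l * pA) := by
      have := h2.mul_left (Real.exp l)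
      convert this using 2 with k
      · rfl
      split_ifs
      · rw [← mul_div_assoc, ← mul_assoc, ← Real.exp_add]
        simp
      · ring
    have h4 : HasSum (fun k : ℕ => pA * ((l:ℝ) ^ k / (Nat.factorial k))) (pA * Real.exp l) :=
      (hasSum_exp' (l:ℝ)).mul_left pA
    have h5 := h1.sub h4
    rw [mul_comm, sub_self] at h5
    convert h5 using 2 with k
    · rfl
    split_ifs <;> ring
  exact tail_bound (l:ℝ) hl0 _ hgbd hS0 fA hf0 hstein

/-- Total variation distance between two measures on `ℕ`. -/
noncomputable def dTV (ν ρ : MeasureTheory.Measure ℕ) : ℝ :=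
  ⨆ A : Set ℕ, |(ν A).toReal - (ρ A).toReal|

/-- bound (2.19). For an exchangeable pair `(W, W')` of
non-negative-integer-valued random variables with `E W < ∞`, `λ > 0`, and `f_A` the
solutions of the Poisson Stein equation, for every `c > 0`,
`d_TV(L(W), Po(λ)) ≤ sup_A |E[(c P₁(W) - λ) f_A(W+1) - (c P₋₁(W) - W) f_A(W)]|`. -/
theorem poisson_approximation_exchangeable
    {Ω : Type*} [MeasurableSpace Ω] (μ : Measure Ω) [IsProbabilityMeasure μ]
    (W W' : Ω → ℕ) (hW : Measurable W) (hW' : Measurable W')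
    (hexch : μ.map (fun ω => (W ω, W' ω)) = μ.map (fun ω => (W' ω, W ω)))
    (hint : Integrable (fun ω => (W ω : ℝ)) μ)
    (l : ℝ≥0) (hl : 0 < l)
    (f : Set ℕ → ℕ → ℝ)
    (hf0 : ∀ A, f A 0 = 0)
    (hstein : ∀ (A : Set ℕ) (j : ℕ),
      (l : ℝ) * f A (j + 1) - (j : ℝ) * f A j
        = (if j ∈ A then 1 else 0) - ((poissonMeasure l) A).toReal)
    (c : ℝ) (hc : 0 < c) :
    dTV (μ.map W) (poissonMeasure l)
      ≤ ⨆ A : Set ℕ, |∫ ω,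
          ((c * (μ[(fun ω' => if W' ω' = W ω' + 1 then (1 : ℝ) else 0) |
                MeasurableSpace.comap W inferInstance]) ω - (l : ℝ)) * f A (W ω + 1)
            - (c * (μ[(fun ω' => if W ω' = W' ω' + 1 then (1 : ℝ) else 0) |
                MeasurableSpace.comap W inferInstance]) ω - (W ω : ℝ)) * f A (W ω)) ∂μ| := by
  classical
  have hm : MeasurableSpace.comap W inferInstance ≤ ‹MeasurableSpace Ω› := hW.comap_le
  have hWm : Measurable[MeasurableSpace.comap W inferInstance] W :=
    fun s _hs => ⟨s, ⟨MeasurableSet.of_discrete, rfl⟩⟩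
  set g1 : Ω → ℝ := fun ω => if W' ω = W ω + 1 then (1 : ℝ) else 0 with hg1def
  set g2 : Ω → ℝ := fun ω => if W ω = W' ω + 1 then (1 : ℝ) else 0 with hg2def
  set P1 : Ω → ℝ := μ[g1 | MeasurableSpace.comap W inferInstance] with hP1def
  set P2 : Ω → ℝ := μ[g2 | MeasurableSpace.comap W inferInstance] with hP2def
  have hpair : Measurable (fun ω => (W ω, W' ω)) := hW.prodMk hW'
  have hpair' : Measurable (fun ω => (W' ω, W ω)) := hW'.prodMk hW
  have hg1meas : Measurable g1 := by
    have : g1 = (fun p : ℕ × ℕ => if p.2 = p.1 + 1 then (1:ℝ) else 0)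
        ∘ (fun ω => (W ω, W' ω)) := rfl
    rw [this]
    exact (measurable_of_countable _).comp hpair
  have hg2meas : Measurable g2 := by
    have : g2 = (fun p : ℕ × ℕ => if p.2 = p.1 + 1 then (1:ℝ) else 0)
        ∘ (fun ω => (W' ω, W ω)) := rfl
    rw [this]
    exact (measurable_of_countable _).comp hpair'
  have hg1bd : ∀ ω, |g1 ω| ≤ (1 : ℝ) := by
    intro ω; simp only [hg1def]; split_ifs <;> simp
  have hg2bd : ∀ ω, |g2 ω| ≤ (1 : ℝ) := by
    intro ω; simp only [hg2def]; split_ifs <;> simp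
  have hg1int : Integrable g1 μ := by
    apply Integrable.mono' (integrable_const (1:ℝ)) hg1meas.aestronglyMeasurable
    exact ae_of_all _ fun ω => by simpa [Real.norm_eq_abs] using hg1bd ω
  have hg2int : Integrable g2 μ := by
    apply Integrable.mono' (integrable_const (1:ℝ)) hg2meas.aestronglyMeasurable
    exact ae_of_all _ fun ω => by simpa [Real.norm_eq_abs] using hg2bd ω
  have hP1bd : ∀ᵐ ω ∂μ, |P1 ω| ≤ ((1:ℝ≥0) : ℝ) :=
    ae_bdd_condExp_of_ae_bdd (ae_of_all _ (by simpa using hg1bd))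
  have hP2bd : ∀ᵐ ω ∂μ, |P2 ω| ≤ ((1:ℝ≥0) : ℝ) :=
    ae_bdd_condExp_of_ae_bdd (ae_of_all _ (by simpa using hg2bd))
  set M : ℝ := Real.exp l with hMdef
  have hM0 : 0 ≤ M := (Real.exp_pos _).le
  -- the per-A key identity
  have key : ∀ A : Set ℕ,
      |((μ.map W) A).toReal - ((poissonMeasure l) A).toReal|
        = |∫ ω, ((c * P1 ω - (l : ℝ)) * f A (W ω + 1)
            - (c * P2 ω - (W ω : ℝ)) * f A (W ω)) ∂μ| := by
    intro A
    have hbd : ∀ j, |f A j| ≤ M := stein_bound l hl A (f A) (hf0 A) (hstein A)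
    set φ : Ω → ℝ := fun ω => f A (W ω) with hφdef
    set φ' : Ω → ℝ := fun ω => f A (W ω + 1) with hφ'def
    have hφm : Measurable[MeasurableSpace.comap W inferInstance] φ := (measurable_of_countable (fun n => f A n)).comp hWm
    have hφ'm : Measurable[MeasurableSpace.comap W inferInstance] φ' := (measurable_of_countable (fun n => f A (n+1))).comp hWm
    have hφmeas : Measurable φ := hφm.mono hm le_rfl
    have hφ'meas : Measurable φ' := hφ'm.mono hm le_rfl
    have hφint : Integrable φ μ := by
      apply Integrable.mono' (integrable_const M) hφmeas.aestronglyMeasurable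
      exact ae_of_all _ fun ω => by simpa [Real.norm_eq_abs] using hbd (W ω)
    have hφ'int : Integrable φ' μ := by
      apply Integrable.mono' (integrable_const M) hφ'meas.aestronglyMeasurable
      exact ae_of_all _ fun ω => by simpa [Real.norm_eq_abs] using hbd (W ω + 1)
    have hWφint : Integrable (fun ω => (W ω : ℝ) * φ ω) μ := by
      apply Integrable.mono' (hint.const_mul M)
        (((measurable_of_countable (fun n : ℕ => (n:ℝ))).comp hW).mul hφmeas
          |>.aestronglyMeasurable)
      refine ae_of_all _ fun ω => ?_
      rw [Real.norm_eq_abs, Pi.mul_apply, abs_mul]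
      simp only [Function.comp_apply, Nat.abs_cast]
      calc (W ω : ℝ) * |φ ω| ≤ (W ω : ℝ) * M :=
            mul_le_mul_of_nonneg_left (hbd (W ω)) (by positivity)
        _ = M * (W ω : ℝ) := mul_comm _ _
    have hP1φ'int : Integrable (fun ω => φ' ω * P1 ω) μ := by
      apply Integrable.mono' (integrable_const (M * 1))
        ((hφ'meas.mul (stronglyMeasurable_condExp.mono hm).measurable).aestronglyMeasurable)
      filter_upwards [hP1bd] with ω hω
      rw [Real.norm_eq_abs, Pi.mul_apply, abs_mul]
      have := mul_le_mul (hbd (W ω + 1)) hω (abs_nonneg _) hM0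
      simpa using this
    have hP2φint : Integrable (fun ω => φ ω * P2 ω) μ := by
      apply Integrable.mono' (integrable_const (M * 1))
        ((hφmeas.mul (stronglyMeasurable_condExp.mono hm).measurable).aestronglyMeasurable)
      filter_upwards [hP2bd] with ω hω
      rw [Real.norm_eq_abs, Pi.mul_apply, abs_mul]
      have := mul_le_mul (hbd (W ω)) hω (abs_nonneg _) hM0
      simpa using this
    have hφ'g1int : Integrable (φ' * g1) μ := by
      apply Integrable.mono' (integrable_const (M * 1))
        (hφ'meas.aestronglyMeasurable.mul hg1meas.aestronglyMeasurable)
      refine ae_of_all _ fun ω => ?_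
      rw [Pi.mul_apply, Real.norm_eq_abs, abs_mul]
      exact mul_le_mul (hbd (W ω + 1)) (hg1bd ω) (abs_nonneg _) hM0
    have hφg2int : Integrable (φ * g2) μ := by
      apply Integrable.mono' (integrable_const (M * 1))
        (hφmeas.aestronglyMeasurable.mul hg2meas.aestronglyMeasurable)
      refine ae_of_all _ fun ω => ?_
      rw [Pi.mul_apply, Real.norm_eq_abs, abs_mul]
      exact mul_le_mul (hbd (W ω)) (hg2bd ω) (abs_nonneg _) hM0
    -- pull out conditional expectations
    have I1 : ∫ ω, φ' ω * P1 ω ∂μ = ∫ ω, φ' ω * g1 ω ∂μ := by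
      have h := condExp_mul_of_stronglyMeasurable_left (m := MeasurableSpace.comap W inferInstance) (μ := μ)
        hφ'm.stronglyMeasurable hφ'g1int hg1int
      calc ∫ ω, φ' ω * P1 ω ∂μ = ∫ ω, (μ[φ' * g1 | MeasurableSpace.comap W inferInstance]) ω ∂μ :=
            (integral_congr_ae (h.mono fun ω hω => by
              simpa [hP1def] using hω.symm))
        _ = ∫ ω, (φ' * g1) ω ∂μ := integral_condExp hm
        _ = ∫ ω, φ' ω * g1 ω ∂μ := rfl
    have I2 : ∫ ω, φ ω * P2 ω ∂μ = ∫ ω, φ ω * g2 ω ∂μ := by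
      have h := condExp_mul_of_stronglyMeasurable_left (m := MeasurableSpace.comap W inferInstance) (μ := μ)
        hφm.stronglyMeasurable hφg2int hg2int
      calc ∫ ω, φ ω * P2 ω ∂μ = ∫ ω, (μ[φ * g2 | MeasurableSpace.comap W inferInstance]) ω ∂μ :=
            (integral_congr_ae (h.mono fun ω hω => by
              simpa [hP2def] using hω.symm))
        _ = ∫ ω, (φ * g2) ω ∂μ := integral_condExp hm
        _ = ∫ ω, φ ω * g2 ω ∂μ := rfl
    -- exchangeability
    have I3 : ∫ ω, φ' ω * g1 ω ∂μ = ∫ ω, φ ω * g2 ω ∂μ := by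
      set h : ℕ × ℕ → ℝ := fun p => if p.2 = p.1 + 1 then f A (p.1 + 1) else 0 with hhdef
      have hhmeas : Measurable h := measurable_of_countable _
      have e1 : ∀ ω, φ' ω * g1 ω = h (W ω, W' ω) := by
        intro ω
        simp only [hφ'def, hg1def, hhdef]
        split_ifs <;> ring
      have e2 : ∀ ω, φ ω * g2 ω = h (W' ω, W ω) := by
        intro ω
        simp only [hφdef, hg2def, hhdef]
        split_ifs with hcond
        · rw [← hcond]; ring
        · ring
      calc ∫ ω, φ' ω * g1 ω ∂μ = ∫ ω, h (W ω, W' ω) ∂μ := by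
            exact integral_congr_ae (ae_of_all _ e1)
        _ = ∫ p, h p ∂(μ.map (fun ω => (W ω, W' ω))) :=
            (integral_map hpair.aemeasurable hhmeas.aestronglyMeasurable).symm
        _ = ∫ p, h p ∂(μ.map (fun ω => (W' ω, W ω))) := by rw [hexch]
        _ = ∫ ω, h (W' ω, W ω) ∂μ :=
            integral_map hpair'.aemeasurable hhmeas.aestronglyMeasurable
        _ = ∫ ω, φ ω * g2 ω ∂μ := by
            exact (integral_congr_ae (ae_of_all _ e2)).symm
    -- Stein identity
    have hindint : Integrable (fun ω => if W ω ∈ A then (1:ℝ) else 0) μ := by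
      apply Integrable.mono' (integrable_const (1:ℝ))
        ((measurable_of_countable (fun n => if n ∈ A then (1:ℝ) else 0)).comp hW
          |>.aestronglyMeasurable)
      exact ae_of_all _ fun ω => by
        by_cases h : W ω ∈ A <;> simp [Function.comp, h]
    have I4 : (l : ℝ) * (∫ ω, φ' ω ∂μ) - ∫ ω, (W ω : ℝ) * φ ω ∂μ
        = ((μ.map W) A).toReal - ((poissonMeasure l) A).toReal := by
      have e : ∀ ω, (l : ℝ) * φ' ω - (W ω : ℝ) * φ ω
          = (if W ω ∈ A then (1:ℝ) else 0) - ((poissonMeasure l) A).toReal := by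
        intro ω
        simpa [hφdef, hφ'def] using hstein A (W ω)
      calc (l : ℝ) * (∫ ω, φ' ω ∂μ) - ∫ ω, (W ω : ℝ) * φ ω ∂μ
          = ∫ ω, ((l : ℝ) * φ' ω - (W ω : ℝ) * φ ω) ∂μ := by
            rw [integral_sub (hφ'int.const_mul _) hWφint, integral_const_mul]
        _ = ∫ ω, ((if W ω ∈ A then (1:ℝ) else 0) - ((poissonMeasure l) A).toReal) ∂μ :=
            integral_congr_ae (ae_of_all _ e)
        _ = (∫ ω, (if W ω ∈ A then (1:ℝ) else 0) ∂μ) - ((poissonMeasure l) A).toReal := by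
            rw [integral_sub hindint (integrable_const _), integral_const]
            simp
        _ = ((μ.map W) A).toReal - ((poissonMeasure l) A).toReal := by
            congr 1
            have : (fun ω => if W ω ∈ A then (1:ℝ) else 0)
                = (W ⁻¹' A).indicator (1 : Ω → ℝ) := by
              funext ω
              simp [Set.indicator_apply, Set.mem_preimage]
            rw [this, integral_indicator_one (hW MeasurableSet.of_discrete), measureReal_def,
              Measure.map_apply hW MeasurableSet.of_discrete]
    -- assemble
    have esplit : ∀ ω, (c * P1 ω - (l : ℝ)) * φ' ω - (c * P2 ω - (W ω : ℝ)) * φ ω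
        = c * (φ' ω * P1 ω) - c * (φ ω * P2 ω)
          - ((l : ℝ) * φ' ω - (W ω : ℝ) * φ ω) := fun ω => by ring
    have hsub1 : Integrable (fun ω => c * (φ' ω * P1 ω) - c * (φ ω * P2 ω)) μ :=
      (hP1φ'int.const_mul c).sub (hP2φint.const_mul c)
    have hsub2 : Integrable (fun ω => (l : ℝ) * φ' ω - (W ω : ℝ) * φ ω) μ :=
      (hφ'int.const_mul _).sub hWφint
    have hIval : ∫ ω, ((c * P1 ω - (l : ℝ)) * φ' ω - (c * P2 ω - (W ω : ℝ)) * φ ω) ∂μ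
        = -(((μ.map W) A).toReal - ((poissonMeasure l) A).toReal) := by
      rw [integral_congr_ae (ae_of_all _ esplit), integral_sub hsub1 hsub2,
        integral_sub (hP1φ'int.const_mul c) (hP2φint.const_mul c),
        integral_const_mul, integral_const_mul, I1, I2, I3,
        integral_sub (hφ'int.const_mul _) hWφint, integral_const_mul, sub_self]
      rw [zero_sub]
      exact congrArg Neg.neg I4
    rw [hIval, abs_neg]
  show dTV (μ.map W) (poissonMeasure l) ≤ _
  rw [dTV]
  exact le_of_eq (iSup_congr key)
end
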